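/- Let γ > 0 and let φ : ℝ → ℝ be a nonnegative Schwartz function, not identically zero, such that its Fourier transform φ̂ is even and supported in [−1,1]. Then the constant C := (∫₀^∞ s^{2/γ−1} φ(s) ds)^{−1} is well defined and strictly positive, and the family W_t(λ) := C·φ(λ^{γ/2} t) (for t > 0) satisfies: (i) for every λ > 0, ∫₀^∞ t^{2/γ−1} W_t(λ) dt = λ^{−1}; (ii) W_t(λ) ≥ 0 for all λ ≥ 0 and t > 0; (iii) for every integer l ≥ 0 there is a constant C_l > 0 such that (1 + t^{2/γ} λ)^l · W_t(λ) ≤ C_l for all λ ≥ 0 and t > 0. -/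

import Mathlib

open MeasureTheory Real

/-- The Fourier transform with the convention `φ̂(k) = (2π)⁻¹ ∫ φ(x) e^{−i k x} dx`. -/
noncomputable def fourierHat (f : ℝ → ℝ) (k : ℝ) : ℂ :=
  (2 * Real.pi : ℂ)⁻¹ * ∫ x : ℝ, (f x : ℂ) * Complex.exp (-(Complex.I * k * x))

open Set Filter FourierTransform in
theorem stmt0 (γ : ℝ) (hγ : 0 < γ) (φ : SchwartzMap ℝ ℝ)
    (hφ_nonneg : ∀ x : ℝ, 0 ≤ φ x) (hφ_ne : ∃ x : ℝ, φ x ≠ 0)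
    (hhat_even : ∀ k : ℝ, fourierHat (fun x => φ x) (-k) = fourierHat (fun x => φ x) k)
    (hhat_supp : ∀ k : ℝ, k ∉ Set.Icc (-1 : ℝ) 1 → fourierHat (fun x => φ x) k = 0) :
    (0 < ∫ s in Set.Ioi (0 : ℝ), s ^ (2 / γ - 1) * φ s) ∧
    (∀ lam : ℝ, 0 < lam →
      ∫ t in Set.Ioi (0 : ℝ),
        t ^ (2 / γ - 1) *
          ((∫ s in Set.Ioi (0 : ℝ), s ^ (2 / γ - 1) * φ s)⁻¹ * φ (lam ^ (γ / 2) * t))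
        = lam⁻¹) ∧
    (∀ lam : ℝ, 0 ≤ lam → ∀ t : ℝ, 0 < t →
      0 ≤ (∫ s in Set.Ioi (0 : ℝ), s ^ (2 / γ - 1) * φ s)⁻¹ * φ (lam ^ (γ / 2) * t)) ∧
    (∀ l : ℕ, ∃ C : ℝ, 0 < C ∧ ∀ lam : ℝ, 0 ≤ lam → ∀ t : ℝ, 0 < t →
      (1 + t ^ (2 / γ) * lam) ^ l *
        ((∫ s in Set.Ioi (0 : ℝ), s ^ (2 / γ - 1) * φ s)⁻¹ * φ (lam ^ (γ / 2) * t)) ≤ C) := by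
  have hγ2 : (0:ℝ) < 2 / γ := by positivity
  set F : ℝ → ℂ := fun x => (φ x : ℂ) with hF
  have hFint : Integrable F := (SchwartzMap.integrable φ).ofReal
  have hπC : (2 * Real.pi : ℂ) ≠ 0 := by
    have : ((2 * Real.pi : ℝ) : ℂ) ≠ 0 := Complex.ofReal_ne_zero.mpr (by positivity)
    simpa using this
  -- φ is even
  have heven : ∀ x : ℝ, φ (-x) = φ x := by
    have hrel : ∀ k : ℝ, fourierHat (fun x => φ x) k
        = (2 * Real.pi : ℂ)⁻¹ * 𝓕 F (k / (2 * Real.pi)) := by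
      intro k
      show (2 * Real.pi : ℂ)⁻¹ * ∫ x : ℝ, F x * Complex.exp (-(Complex.I * k * x))
          = (2 * Real.pi : ℂ)⁻¹ * 𝓕 F (k / (2 * Real.pi))
      rw [Real.fourier_real_eq_integral_exp_smul]
      congr 1
      congr 1
      funext v
      rw [smul_eq_mul, mul_comm]
      congr 1
      have h2 : -2 * π * v * (k / (2 * π)) = -(k * v) := by
        field_simp
      rw [h2]
      push_cast
      ring
    have hFhat_even : ∀ w : ℝ, 𝓕 F (-w) = 𝓕 F w := by
      intro w
      have h1 := hhat_even (2 * Real.pi * w)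
      rw [hrel, hrel] at h1
      have h2 : (2 * Real.pi * w) / (2 * Real.pi) = w := by
        field_simp
        try ring
      have h3 : (-(2 * Real.pi * w)) / (2 * Real.pi) = -w := by
        field_simp
        try ring
      rw [h2, h3] at h1
      exact mul_left_cancel₀ (inv_ne_zero hπC) h1
    set ψ : ℝ → ℂ := fun x => F x - F (-x) with hψ
    have hFnegint : Integrable (fun x : ℝ => F (-x)) := hFint.comp_neg
    have hψint : Integrable ψ := hFint.sub hFnegint
    have hψhat : 𝓕 ψ = (0 : ℝ → ℂ) := by
      funext w
      have hi1 : Integrable (fun v : ℝ => 𝐞 (-(v * w)) • F v) := by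
        have := (Real.fourierIntegral_convergent_iff (f := F) (μ := volume) w).mpr hFint
        simpa [RCLike.inner_apply, conj_trivial, mul_comm w] using this
      have hi2 : Integrable (fun v : ℝ => 𝐞 (-(v * w)) • F (-v)) := by
        have := (Real.fourierIntegral_convergent_iff (f := fun x : ℝ => F (-x))
          (μ := volume) w).mpr hFnegint
        simpa [RCLike.inner_apply, conj_trivial, mul_comm w] using this
      rw [Real.fourier_real_eq]
      have hsplit : ∀ v : ℝ, 𝐞 (-(v * w)) • ψ v
          = 𝐞 (-(v * w)) • F v - 𝐞 (-(v * w)) • F (-v) := fun v => smul_sub _ _ _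
      rw [integral_congr_ae (Filter.Eventually.of_forall hsplit), integral_sub hi1 hi2]
      have e1 : (∫ v : ℝ, 𝐞 (-(v * w)) • F v) = 𝓕 F w := (Real.fourier_real_eq F w).symm
      have e2 : (∫ v : ℝ, 𝐞 (-(v * w)) • F (-v)) = 𝓕 (fun x : ℝ => F (-x)) w :=
        (Real.fourier_real_eq _ w).symm
      rw [e1, e2, ← Real.fourierInv_eq_fourier_comp_neg,
        Real.fourierInv_eq_fourier_neg, hFhat_even, Pi.zero_apply, sub_self]
    have hψcont : Continuous ψ :=
      (Complex.continuous_ofReal.comp φ.continuous).sub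
        ((Complex.continuous_ofReal.comp φ.continuous).comp continuous_neg)
    have hψ0 : ψ = 0 := by
      have h2 := hψcont.fourierInv_fourier_eq hψint
        (by rw [hψhat]; exact integrable_zero _ _ _)
      rw [hψhat] at h2
      have hinv0 : 𝓕⁻ (0 : ℝ → ℂ) = 0 := by
        funext w
        simp [Real.fourierInv_eq]
      rw [hinv0] at h2
      exact h2.symm
    intro x
    have hx := congrFun hψ0 x
    have : (φ x : ℂ) = (φ (-x) : ℂ) := sub_eq_zero.mp hx
    exact_mod_cast this.symm
  -- Integrability of the Mellin-type integral
  set N : ℕ := ⌈2/γ⌉₊ + 1 with hN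
  have hInt : IntegrableOn (fun t : ℝ => t ^ (2/γ - 1) * φ t) (Ioi 0) := by
    have hloc : LocallyIntegrableOn (fun t : ℝ => φ t) (Ioi 0) := by
      have : LocallyIntegrable (fun t : ℝ => φ t) volume := φ.continuous.locallyIntegrable
      exact this.locallyIntegrableOn _
    have hφ_top : (fun t : ℝ => φ t) =O[atTop] (fun t : ℝ => t ^ (-(N:ℝ))) := by
      obtain ⟨C, hC⟩ := φ.decay N 0
      rw [Asymptotics.isBigO_iff]
      refine ⟨C, Filter.eventually_atTop.2 ⟨1, fun x hx => ?_⟩⟩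
      have hx0 : (0:ℝ) < x := lt_of_lt_of_le one_pos hx
      have h1 := hC.2 x
      rw [norm_iteratedFDeriv_zero, Real.norm_eq_abs, abs_of_pos hx0] at h1
      rw [Real.norm_eq_abs (x ^ (-(N:ℝ))), abs_of_pos (Real.rpow_pos_of_pos hx0 _),
        Real.rpow_neg hx0.le, Real.rpow_natCast, ← div_eq_mul_inv,
        le_div_iff₀ (pow_pos hx0 N), mul_comm]
      exact h1
    have hφ_bot : (fun t : ℝ => φ t) =O[nhdsWithin 0 (Ioi 0)]
        (fun t : ℝ => t ^ (-(0:ℝ))) := by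
      have heq : (fun t : ℝ => t ^ (-(0:ℝ))) = fun _ : ℝ => (1:ℝ) := by
        funext t; rw [neg_zero, Real.rpow_zero]
      rw [heq]
      exact ((φ.continuous.tendsto 0).mono_left nhdsWithin_le_nhds).isBigO_one ℝ
    have h2N : 2/γ < (N:ℝ) := by
      have := Nat.le_ceil (2/γ)
      have hlt : (⌈2/γ⌉₊ : ℝ) < (N:ℝ) := by
        rw [hN]; push_cast; linarith
      linarith
    exact mellin_convergent_of_isBigO_scalar hloc hφ_top h2N hφ_bot hγ2
  -- positivity of the normalizing integral
  have hIpos : 0 < ∫ s in Ioi (0:ℝ), s ^ (2/γ - 1) * φ s := by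
    obtain ⟨x, hx⟩ := hφ_ne
    have hxpos : 0 < φ x := (hφ_nonneg x).lt_of_ne (Ne.symm hx)
    have hx0 : ∃ y : ℝ, 0 < y ∧ 0 < φ y := by
      rcases lt_trichotomy x 0 with h|h|h
      · exact ⟨-x, by linarith, by rw [heven x]; exact hxpos⟩
      · subst h
        have hU : IsOpen {y : ℝ | 0 < φ y} := isOpen_lt continuous_const φ.continuous
        obtain ⟨ε, hε, hball⟩ := Metric.isOpen_iff.1 hU 0 hxpos
        refine ⟨ε/2, by linarith, hball ?_⟩
        simp only [Metric.mem_ball, Real.dist_eq, sub_zero]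
        rw [abs_of_pos (by linarith)]
        linarith
      · exact ⟨x, h, hxpos⟩
    obtain ⟨x0, hx0pos, hφx0⟩ := hx0
    have hnn : (0 : ℝ → ℝ) ≤ᶠ[ae (volume.restrict (Ioi 0))]
        fun t : ℝ => t ^ (2/γ - 1) * φ t := by
      filter_upwards [ae_restrict_mem measurableSet_Ioi] with t ht
      simp only [Pi.zero_apply]
      exact mul_nonneg (Real.rpow_nonneg (le_of_lt ht) _) (hφ_nonneg t)
    rw [setIntegral_pos_iff_support_of_nonneg_ae hnn hInt]
    · have hU : IsOpen {y : ℝ | 0 < φ y} := isOpen_lt continuous_const φ.continuous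
      obtain ⟨ε, hε, hball⟩ := Metric.isOpen_iff.1 hU x0 hφx0
      set δ : ℝ := min ε x0 with hδdef
      have hδ : 0 < δ := lt_min hε hx0pos
      have hsub : Ioo (x0 - δ/2) (x0 + δ/2) ⊆
          Function.support (fun t : ℝ => t ^ (2/γ - 1) * φ t) ∩ Ioi 0 := by
        intro y hy
        have hymem : y ∈ Metric.ball x0 ε := by
          simp only [Metric.mem_ball, Real.dist_eq]
          have h1 : δ ≤ ε := min_le_left _ _
          rw [abs_lt]
          constructor <;> [linarith [hy.1]; linarith [hy.2]]
        have hyφ : 0 < φ y := hball hymem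
        have hypos : 0 < y := by
          have : δ ≤ x0 := min_le_right _ _
          have := hy.1
          linarith
        refine ⟨?_, hypos⟩
        have : 0 < y ^ (2/γ - 1) * φ y :=
          mul_pos (Real.rpow_pos_of_pos hypos _) hyφ
        exact ne_of_gt this
      calc (0:ENNReal) < volume (Ioo (x0 - δ/2) (x0 + δ/2)) := by
            rw [Real.volume_Ioo]
            exact ENNReal.ofReal_pos.2 (by linarith)
        _ ≤ _ := measure_mono hsub
  have hIne : (∫ s in Ioi (0:ℝ), s ^ (2/γ - 1) * φ s) ≠ 0 := ne_of_gt hIpos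
  refine ⟨hIpos, ?_, ?_, ?_⟩
  · -- change of variables
    intro lam hlam
    set I : ℝ := ∫ s in Ioi (0:ℝ), s ^ (2/γ - 1) * φ s with hI
    set c : ℝ := lam ^ (γ/2) with hc
    have hcpos : 0 < c := Real.rpow_pos_of_pos hlam _
    have key : (∫ t in Ioi (0:ℝ), t ^ (2/γ - 1) * φ (c * t))
        = c ^ (-(2/γ)) * I := by
      have h1 : ∀ t ∈ Ioi (0:ℝ), t ^ (2/γ - 1) * φ (c*t)
          = c ^ (-(2/γ - 1)) * ((fun u : ℝ => u ^ (2/γ - 1) * φ u) (c*t)) := by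
        intro t ht
        simp only
        rw [Real.mul_rpow hcpos.le (le_of_lt ht), Real.rpow_neg hcpos.le]
        have hcne : c ^ (2/γ - 1) ≠ 0 := ne_of_gt (Real.rpow_pos_of_pos hcpos _)
        field_simp
      rw [setIntegral_congr_fun measurableSet_Ioi h1, integral_const_mul,
        MeasureTheory.integral_comp_mul_left_Ioi (fun u : ℝ => u ^ (2/γ - 1) * φ u) 0 hcpos]
      rw [mul_zero, smul_eq_mul, ← mul_assoc]
      rw [← hI]
      congr 1
      rw [← Real.rpow_neg_one c, ← Real.rpow_add hcpos]
      congr 1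
      ring
    have hintegrand : ∀ t : ℝ, t ^ (2/γ - 1) * (I⁻¹ * φ (c*t))
        = I⁻¹ * (t ^ (2/γ - 1) * φ (c*t)) := fun t => by ring
    rw [integral_congr_ae (Filter.Eventually.of_forall fun t => hintegrand t),
      integral_const_mul, key]
    rw [mul_comm (c ^ (-(2/γ))) I, ← mul_assoc, inv_mul_cancel₀ hIne, one_mul]
    rw [hc, ← Real.rpow_mul hlam.le]
    have hexp : (γ/2) * (-(2/γ)) = -1 := by field_simp
    rw [hexp, Real.rpow_neg_one]
  · -- nonnegativity
    intro lam _ t _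
    exact mul_nonneg (inv_nonneg.2 hIpos.le) (hφ_nonneg _)
  · -- decay estimate
    intro l
    set I : ℝ := ∫ s in Ioi (0:ℝ), s ^ (2/γ - 1) * φ s with hI
    set M : ℕ := ⌈2/γ⌉₊ with hM
    have hM1 : (1:ℝ) ≤ M := by
      exact_mod_cast Nat.one_le_iff_ne_zero.2 (by
        simp only [hM, ne_eq, Nat.ceil_eq_zero, not_le]
        exact hγ2)
    have key : ∃ K : ℝ, 0 ≤ K ∧ ∀ u : ℝ, 0 ≤ u → (1 + u ^ (2/γ))^l * φ u ≤ K := by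
      set S : ℝ := ((Finset.Iic ((M*l : ℕ), (0:ℕ))).sup
        (fun p : ℕ × ℕ => SchwartzMap.seminorm ℝ p.1 p.2)) φ with hS
      have hS0 : 0 ≤ S := apply_nonneg _ φ
      refine ⟨2^l * (2 ^ (M*l) * S), by positivity, ?_⟩
      intro u hu
      have hrpnn : 0 ≤ u ^ (2/γ) := Real.rpow_nonneg hu _
      have h1u : (1:ℝ) ≤ (1+u)^M := one_le_pow₀ (by linarith)
      have hNu : u ^ (2/γ) ≤ (1+u)^M := by
        rcases le_total u 1 with h|h
        · calc u ^ (2/γ) ≤ 1 := Real.rpow_le_one hu h hγ2.le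
            _ ≤ (1+u)^M := h1u
        · calc u ^ (2/γ) ≤ u ^ ((M:ℕ):ℝ) :=
              Real.rpow_le_rpow_of_exponent_le h (Nat.le_ceil _)
            _ = u ^ (M:ℕ) := Real.rpow_natCast u M
            _ ≤ (1+u)^M := pow_le_pow_left₀ (le_trans zero_le_one h) (by linarith) M
      have h1 : 1 + u ^ (2/γ) ≤ 2 * (1+u)^M := by linarith
      have h2 : (1 + u ^ (2/γ))^l ≤ 2^l * (1+u)^(M*l) := by
        calc (1 + u ^ (2/γ))^l ≤ (2*(1+u)^M)^l :=
              pow_le_pow_left₀ (by linarith) h1 l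
          _ = 2^l * ((1+u)^M)^l := mul_pow _ _ l
          _ = 2^l * (1+u)^(M*l) := by rw [← pow_mul]
      have h3 := SchwartzMap.one_add_le_sup_seminorm_apply (𝕜 := ℝ)
        (m := ((M*l : ℕ), (0:ℕ))) (k := M*l) (n := 0) le_rfl le_rfl φ u
      rw [norm_iteratedFDeriv_zero, Real.norm_eq_abs, abs_of_nonneg hu,
        Real.norm_eq_abs, abs_of_nonneg (hφ_nonneg u)] at h3
      calc (1 + u ^ (2/γ))^l * φ u
          ≤ (2^l * (1+u)^(M*l)) * φ u :=
            mul_le_mul_of_nonneg_right h2 (hφ_nonneg u)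
        _ = 2^l * ((1+u)^(M*l) * φ u) := by ring
        _ ≤ 2^l * (2 ^ (M*l) * S) := by
            refine mul_le_mul_of_nonneg_left ?_ (by positivity)
            exact h3
    obtain ⟨K, hK0, hK⟩ := key
    refine ⟨I⁻¹ * K + 1, by positivity, ?_⟩
    intro lam hlam t ht
    have hIinv : 0 ≤ I⁻¹ := inv_nonneg.2 hIpos.le
    rcases eq_or_lt_of_le hlam with heq | hlam'
    · -- lam = 0
      rw [← heq]
      have hz1 : (0:ℝ) ^ (γ/2) = 0 := Real.zero_rpow (by positivity)
      have hz2 : (0:ℝ) ^ (2/γ) = 0 := Real.zero_rpow (ne_of_gt hγ2)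
      have hK0' := hK 0 le_rfl
      rw [hz2] at hK0'
      simp only [add_zero, one_pow, one_mul, mul_zero, hz1, zero_mul] at hK0' ⊢
      have : I⁻¹ * φ 0 ≤ I⁻¹ * K :=
        mul_le_mul_of_nonneg_left hK0' hIinv
      linarith
    · set u : ℝ := lam ^ (γ/2) * t with hu
      have hu0 : 0 ≤ u := mul_nonneg (Real.rpow_nonneg hlam _) ht.le
      have hid : 1 + t ^ (2/γ) * lam = 1 + u ^ (2/γ) := by
        have h1 : u ^ (2/γ) = (lam ^ (γ/2)) ^ (2/γ) * t ^ (2/γ) :=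
          Real.mul_rpow (Real.rpow_nonneg hlam _) ht.le
        have h2 : (lam ^ (γ/2)) ^ (2/γ) = lam := by
          rw [← Real.rpow_mul hlam]
          have hexp : (γ/2) * (2/γ) = 1 := by field_simp
          rw [hexp, Real.rpow_one]
        rw [h1, h2]
        ring
      rw [hid]
      have hKu := hK u hu0
      calc (1 + u ^ (2/γ))^l * (I⁻¹ * φ u)
          = I⁻¹ * ((1 + u ^ (2/γ))^l * φ u) := by ring
        _ ≤ I⁻¹ * K := mul_le_mul_of_nonneg_left hKu hIinv
        _ ≤ I⁻¹ * K + 1 := by linarith
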